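/- Two finite-dimensional complex symplectic representations of a reductive group G that are isomorphic as G-modules are isomorphic as symplectic representations: if (V₁, ω₁) and (V₂, ω₂) are completely reducible G-modules with G-invariant symplectic forms and there is a G-module isomorphism V₁ ≅ V₂, then there exists a G-module isomorphism φ : V₁ → V₂ with ω₂(φ(v), φ(w)) = ω₁(v,w) for all v, w ∈ V₁. -/

import Mathlib

open Polynomial

theorem aux_commute {V : Type*} [AddCommGroup V] [Module ℂ V] (A B : Module.End ℂ V)
    (h : Commute B A) (p : ℂ[X]) : Commute B (aeval A p) := by
  induction p using Polynomial.induction_on' with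
  | add p q hp hq => rw [map_add]; exact hp.add_right hq
  | monomial n c =>
    rw [aeval_monomial]
    exact Commute.mul_right (Commute.symm (Algebra.commutes c B)) (h.pow_right n)

theorem aux_pow_selfadj {V : Type*} [AddCommGroup V] [Module ℂ V]
    (ω : V →ₗ[ℂ] V →ₗ[ℂ] ℂ) (A : Module.End ℂ V)
    (hA : ∀ v w, ω (A v) w = ω v (A w)) (n : ℕ) :
    ∀ v w, ω ((A ^ n) v) w = ω v ((A ^ n) w) := by
  induction n with
  | zero => simp
  | succ n ih =>
    intro v w
    rw [pow_succ, Module.End.mul_apply, Module.End.mul_apply, ih, hA]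
    congr 1
    rw [← Module.End.mul_apply, ← Module.End.mul_apply, ← pow_succ, ← pow_succ']

theorem aux_aeval_selfadj {V : Type*} [AddCommGroup V] [Module ℂ V]
    (ω : V →ₗ[ℂ] V →ₗ[ℂ] ℂ) (A : Module.End ℂ V)
    (hA : ∀ v w, ω (A v) w = ω v (A w)) (p : ℂ[X]) :
    ∀ v w, ω ((aeval A p) v) w = ω v ((aeval A p) w) := by
  induction p using Polynomial.induction_on' with
  | add p q hp hq => intro v w; simp [map_add, LinearMap.add_apply, hp, hq]
  | monomial n c =>
    intro v w
    simp only [aeval_monomial, Module.End.mul_apply, Module.algebraMap_end_apply,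
      map_smul, LinearMap.smul_apply]
    rw [aux_pow_selfadj ω A hA n]


set_option maxHeartbeats 1000000 in
theorem aux_sqrt {V : Type*} [AddCommGroup V] [Module ℂ V] [FiniteDimensional ℂ V]
    (A : Module.End ℂ V) (hA : Function.Bijective A) :
    ∃ p : ℂ[X], (aeval A p) ^ 2 = A ∧ Function.Bijective (aeval A p) := by
  classical
  rcases subsingleton_or_nontrivial (Module.End ℂ V) with hss | hnt
  · exact ⟨X, Subsingleton.elim _ _, by simpa using hA⟩
  have hint : IsIntegral ℂ A := Algebra.IsIntegral.isIntegral A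
  set q : ℂ[X] := minpoly ℂ A with hqdef
  have hq0 : q ≠ 0 := minpoly.ne_zero hint
  have hqA : aeval A q = 0 := minpoly.aeval ℂ A
  set d : ℕ := q.natDegree with hddef
  have hd1 : 1 ≤ d := minpoly.natDegree_pos hint
  -- the constant coefficient of q is nonzero
  have hc : q.coeff 0 ≠ 0 := by
    intro h
    obtain ⟨h1, hh1⟩ := X_dvd_iff.mpr h
    have hne : h1 ≠ 0 := by rintro rfl; simp at hh1; exact hq0 hh1
    have h10 : aeval A h1 = 0 := by
      have : A * aeval A h1 = 0 := by
        have := hqA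
        rw [hh1] at this; simpa using this
      ext v
      have hv : A ((aeval A h1) v) = A 0 := by
        simpa [Module.End.mul_apply] using congrArg (fun (f : Module.End ℂ V) => f v) this
      simpa using hA.1 hv
    have hdvd : q ∣ h1 := minpoly.dvd ℂ A h10
    have := Polynomial.natDegree_le_of_dvd hdvd hne
    rw [hh1, Polynomial.natDegree_mul X_ne_zero hne, natDegree_X] at this
    omega
  -- work in Q := AdjoinRoot q
  set a : AdjoinRoot q := AdjoinRoot.root q with hadef
  have haq : Polynomial.aeval a q = 0 := by
    rw [AdjoinRoot.aeval_eq, AdjoinRoot.mk_self]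
  -- a is a unit
  have hUa : IsUnit a := by
    set c : ℂ := q.coeff 0 with hcdef
    obtain ⟨h2, hh2⟩ : X ∣ (q - C c) := X_dvd_iff.mpr (by simp [hcdef])
    have h3 : a * aeval a h2 + algebraMap ℂ _ c = 0 := by
      have : q = X * h2 + C c := by rw [← hh2]; ring
      calc a * aeval a h2 + algebraMap ℂ _ c
          = aeval a (X * h2 + C c) := by simp
        _ = aeval a q := by rw [← this]
        _ = 0 := haq
    refine IsUnit.of_mul_eq_one ((-c)⁻¹ • aeval a h2) ?_
    have h4 : a * aeval a h2 = algebraMap ℂ _ (-c) := by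
      rw [map_neg]; linear_combination h3
    rw [Algebra.mul_smul_comm, h4, Algebra.smul_def, ← map_mul,
      inv_mul_cancel₀ (neg_ne_zero.mpr hc), map_one]
  -- square-root function on ℂ
  have hsqex : ∀ z : ℂ, ∃ w : ℂ, w ^ 2 = z := fun z =>
    IsAlgClosed.exists_pow_nat_eq z (n := 2) (by norm_num)
  choose sq hsq using hsqex
  -- interpolation polynomial
  set t : Finset ℂ := q.roots.toFinset with htdef
  set p₀ : ℂ[X] := Lagrange.interpolate t id sq with hp0def
  set f : ℂ[X] := p₀ ^ 2 - X with hfdef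
  have hinj : Set.InjOn id (t : Set ℂ) := Function.injective_id.injOn
  have hevalf : ∀ l ∈ t, f.eval l = 0 := by
    intro l hl
    have h5 : p₀.eval l = sq l := Lagrange.eval_interpolate_at_node sq hinj hl
    simp [hfdef, eval_pow, h5, hsq l]
  -- key divisibility : q ∣ f ^ d
  have key : q ∣ f ^ d := by
    by_cases hf : f = 0
    · rw [hf, zero_pow (by omega)]; exact dvd_zero q
    have hle : t.val ≤ f.roots := by
      rw [Multiset.le_iff_count]
      intro l
      rw [htdef, Multiset.toFinset_val, Multiset.count_dedup]
      split_ifs with hmem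
      · have hl : l ∈ t := by rw [htdef]; exact Multiset.mem_toFinset.mpr hmem
        have : f.IsRoot l := hevalf l hl
        have := (Polynomial.count_roots f) ▸ (Polynomial.rootMultiplicity_pos hf).mpr this
        omega
      · omega
    have P1dvd : ((t.val.map fun b => X - C b).prod : ℂ[X]) ∣ f :=
      (Multiset.prod_dvd_prod_of_le (Multiset.map_le_map hle)).trans
        (prod_multiset_X_sub_C_dvd f)
    have hqfact : q = (q.roots.map fun b => X - C b).prod :=
      (IsAlgClosed.splits q).eq_prod_roots_of_monic (minpoly.monic hint)
    have hle2 : q.roots ≤ d • t.val := by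
      rw [Multiset.le_iff_count]
      intro l
      rw [Multiset.count_nsmul]
      by_cases hmem : l ∈ q.roots
      · have h6 : Multiset.count l t.val = 1 := by
          rw [htdef, Multiset.toFinset_val, Multiset.count_dedup, if_pos hmem]
        have h7 : Multiset.count l q.roots ≤ q.roots.card := Multiset.count_le_card l _
        have h8 : q.roots.card ≤ d := (Polynomial.card_roots' q)
        rw [h6]
        omega
      · simp [Multiset.count_eq_zero.mpr hmem]
    have qdvd : q ∣ ((t.val.map fun b => X - C b).prod : ℂ[X]) ^ d := by
      rw [hqfact]
      calc (q.roots.map fun b => X - C b).prod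
          ∣ ((d • t.val).map fun b => X - C b).prod :=
            Multiset.prod_dvd_prod_of_le (Multiset.map_le_map hle2)
        _ = ((t.val.map fun b => X - C b).prod) ^ d := by
            rw [Multiset.map_nsmul, Multiset.prod_nsmul]
    exact qdvd.trans (pow_dvd_pow_of_dvd P1dvd d)
  -- pass to AdjoinRoot
  set s₀ : AdjoinRoot q := AdjoinRoot.mk q p₀ with hs0def
  have hs0a : s₀ ^ 2 - a = AdjoinRoot.mk q f := by
    rw [hfdef, map_sub, map_pow, AdjoinRoot.mk_X]
  have hnil : IsNilpotent (s₀ ^ 2 - a) := by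
    refine ⟨d, ?_⟩
    rw [hs0a, ← map_pow, AdjoinRoot.mk_eq_zero]
    exact key
  have hUs0 : IsUnit s₀ := by
    have : IsUnit (s₀ ^ 2) := by
      have : s₀ ^ 2 = (s₀ ^ 2 - a) + a := by ring
      rw [this]
      exact IsNilpotent.isUnit_add_right_of_commute hnil hUa (Commute.all _ _)
    rw [pow_two] at this
    exact isUnit_of_mul_isUnit_left this
  -- Newton iteration
  set P : (AdjoinRoot q)[X] := X ^ 2 - C a with hPdef
  have hPev : ∀ x : AdjoinRoot q, aeval x P = x ^ 2 - a := by
    intro x; simp [hPdef]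
  have hPder : ∀ x : AdjoinRoot q, IsUnit x → IsUnit (aeval x (derivative P)) := by
    intro x hx
    have hder : aeval x (derivative P) = 2 * x := by
      rw [hPdef]
      simp [derivative_X_pow]; ring
    rw [hder]
    have h2u : IsUnit (2 : AdjoinRoot q) := by
      have := IsUnit.map (algebraMap ℂ (AdjoinRoot q))
        (isUnit_iff_ne_zero.mpr (two_ne_zero (α := ℂ)))
      rwa [map_ofNat] at this
    exact h2u.mul hx
  obtain ⟨r, ⟨hrnil, hr0⟩, -⟩ :=
    Polynomial.existsUnique_nilpotent_sub_and_aeval_eq_zero (P := P)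
      (x := s₀) (by rw [hPev]; exact hnil) (hPder s₀ hUs0)
  have hr2 : r ^ 2 = a := by
    have := hr0; rw [hPev] at this; linear_combination this
  have hUr : IsUnit r := by
    have : IsUnit (r * r) := by rw [← pow_two, hr2]; exact hUa
    exact isUnit_of_mul_isUnit_left this
  obtain ⟨pr, hpr⟩ := AdjoinRoot.mk_surjective r
  -- transfer back to End
  have htrans : ∀ g : ℂ[X], AdjoinRoot.mk q g = 0 → aeval A g = 0 := by
    intro g hg
    obtain ⟨h9, hh9⟩ := AdjoinRoot.mk_eq_zero.mp hg
    rw [hh9, map_mul, hqA, zero_mul]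
  refine ⟨pr, ?_, ?_⟩
  · have : AdjoinRoot.mk q (pr ^ 2 - X) = 0 := by
      rw [map_sub, map_pow, AdjoinRoot.mk_X, hpr, hr2]
      exact sub_self a
    have := htrans _ this
    rw [map_sub, map_pow, aeval_X, sub_eq_zero] at this
    exact this
  · obtain ⟨u, hu⟩ := hUr
    obtain ⟨pu, hpu⟩ := AdjoinRoot.mk_surjective ((u⁻¹ : (AdjoinRoot q)ˣ) : AdjoinRoot q)
    have h10 : AdjoinRoot.mk q (pr * pu - 1) = 0 := by
      rw [map_sub, map_mul, map_one, hpr, hpu, ← hu, Units.mul_inv, sub_self]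
    have h11 : AdjoinRoot.mk q (pu * pr - 1) = 0 := by
      rw [map_sub, map_mul, map_one, hpr, hpu, ← hu, Units.inv_mul, sub_self]
    have h10' : aeval A pr * aeval A pu = 1 := by
      have := htrans _ h10
      rwa [map_sub, map_mul, map_one, sub_eq_zero] at this
    have h11' : aeval A pu * aeval A pr = 1 := by
      have := htrans _ h11
      rwa [map_sub, map_mul, map_one, sub_eq_zero] at this
    rw [Function.bijective_iff_has_inverse]
    refine ⟨aeval A pu, fun v => ?_, fun v => ?_⟩
    · have := congrArg (fun (g : Module.End ℂ V) => g v) h11'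
      simpa [Module.End.mul_apply] using this
    · have := congrArg (fun (g : Module.End ℂ V) => g v) h10'
      simpa [Module.End.mul_apply] using this


theorem stmt9 {G V₁ V₂ : Type*} [Group G]
    [AddCommGroup V₁] [Module ℂ V₁] [FiniteDimensional ℂ V₁]
    [AddCommGroup V₂] [Module ℂ V₂] [FiniteDimensional ℂ V₂]
    (ρ₁ : Representation ℂ G V₁) (ρ₂ : Representation ℂ G V₂)
    (ω₁ : V₁ →ₗ[ℂ] V₁ →ₗ[ℂ] ℂ) (ω₂ : V₂ →ₗ[ℂ] V₂ →ₗ[ℂ] ℂ)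
    (halt₁ : ∀ v, ω₁ v v = 0)
    (hnd₁ : ∀ v, (∀ w, ω₁ v w = 0) → v = 0)
    (hinv₁ : ∀ (g : G) (v w : V₁), ω₁ (ρ₁ g v) (ρ₁ g w) = ω₁ v w)
    (halt₂ : ∀ v, ω₂ v v = 0)
    (hnd₂ : ∀ v, (∀ w, ω₂ v w = 0) → v = 0)
    (hinv₂ : ∀ (g : G) (v w : V₂), ω₂ (ρ₂ g v) (ρ₂ g w) = ω₂ v w)
    (hcr₁ : ∀ W : Submodule ℂ V₁, (∀ g : G, W.map (ρ₁ g) ≤ W) →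
      ∃ W' : Submodule ℂ V₁, (∀ g : G, W'.map (ρ₁ g) ≤ W') ∧ IsCompl W W')
    (hcr₂ : ∀ W : Submodule ℂ V₂, (∀ g : G, W.map (ρ₂ g) ≤ W) →
      ∃ W' : Submodule ℂ V₂, (∀ g : G, W'.map (ρ₂ g) ≤ W') ∧ IsCompl W W')
    (ψ : V₁ ≃ₗ[ℂ] V₂)
    (hψ : ∀ (g : G) (v : V₁), ψ (ρ₁ g v) = ρ₂ g (ψ v)) :
    ∃ φ : V₁ ≃ₗ[ℂ] V₂,
      (∀ (g : G) (v : V₁), φ (ρ₁ g v) = ρ₂ g (φ v)) ∧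
      (∀ v w : V₁, ω₂ (φ v) (φ w) = ω₁ v w) := by
  classical
  -- skew-symmetry
  have hskew₁ : ∀ v w, ω₁ v w = - ω₁ w v := by
    intro v w
    have h := halt₁ (v + w)
    simp only [map_add, LinearMap.add_apply] at h
    linear_combination h - halt₁ v - halt₁ w
  have hskew₂ : ∀ v w, ω₂ v w = - ω₂ w v := by
    intro v w
    have h := halt₂ (v + w)
    simp only [map_add, LinearMap.add_apply] at h
    linear_combination h - halt₂ v - halt₂ w
  have hrho₁ : ∀ (g : G) (w : V₁), ρ₁ g (ρ₁ g⁻¹ w) = w := by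
    intro g w
    have h : ρ₁ g * ρ₁ g⁻¹ = 1 := by rw [← map_mul, mul_inv_cancel, map_one]
    have := congrArg (fun F : Module.End ℂ V₁ => F w) h
    simpa [Module.End.mul_apply] using this
  -- the dual pairing equivalence given by ω₁
  have hinj₁ : Function.Injective (ω₁ : V₁ →ₗ[ℂ] Module.Dual ℂ V₁) := by
    intro x y hxy
    have hz : ∀ w, ω₁ (x - y) w = 0 := by
      intro w
      rw [map_sub, LinearMap.sub_apply]
      rw [show (ω₁ x : Module.Dual ℂ V₁) = ω₁ y from hxy]
      ring
    exact sub_eq_zero.mp (hnd₁ _ hz)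
  have hsurj₁ : Function.Surjective (ω₁ : V₁ →ₗ[ℂ] Module.Dual ℂ V₁) :=
    (LinearMap.injective_iff_surjective_of_finrank_eq_finrank
      (Subspace.dual_finrank_eq).symm).mp hinj₁
  let e₁ : V₁ ≃ₗ[ℂ] Module.Dual ℂ V₁ := LinearEquiv.ofBijective ω₁ ⟨hinj₁, hsurj₁⟩
  let l' : V₁ →ₗ[ℂ] Module.Dual ℂ V₁ :=
    (ψ.toLinearMap.dualMap).comp (ω₂.comp ψ.toLinearMap)
  have hl' : ∀ v w, l' v w = ω₂ (ψ v) (ψ w) := fun v w => rfl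
  let Aop : Module.End ℂ V₁ := (e₁.symm.toLinearMap).comp l'
  have hAop : ∀ v w, ω₁ (Aop v) w = ω₂ (ψ v) (ψ w) := by
    intro v w
    have h1 : (ω₁ (Aop v) : Module.Dual ℂ V₁) = l' v := by
      show e₁ (e₁.symm (l' v)) = l' v
      exact e₁.apply_symm_apply _
    rw [show (ω₁ (Aop v) : Module.Dual ℂ V₁) = l' v from h1]
    exact hl' v w
  have hAinj : Function.Injective Aop := by
    intro x y hxy
    have hz : ∀ w₂ : V₂, ω₂ (ψ (x - y)) w₂ = 0 := by
      intro w₂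
      have h2 : ω₁ (Aop (x - y)) (ψ.symm w₂) = ω₂ (ψ (x - y)) w₂ := by
        rw [hAop]; rw [ψ.apply_symm_apply]
      rw [← h2, map_sub, hxy, sub_self, map_zero, LinearMap.zero_apply]
    have := hnd₂ _ hz
    have := ψ.map_eq_zero_iff.mp this
    exact sub_eq_zero.mp this
  have hAbij : Function.Bijective Aop :=
    ⟨hAinj, (LinearMap.injective_iff_surjective).mp hAinj⟩
  have hAsa : ∀ v w, ω₁ (Aop v) w = ω₁ v (Aop w) := by
    intro v w
    rw [hAop v w, hskew₁ v (Aop w), hAop w v]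
    exact hskew₂ _ _
  have hAequiv : ∀ (g : G) (v : V₁), Aop (ρ₁ g v) = ρ₁ g (Aop v) := by
    intro g v
    have hz : ∀ w, ω₁ (Aop (ρ₁ g v) - ρ₁ g (Aop v)) w = 0 := by
      intro w
      have hL : ω₁ (Aop (ρ₁ g v)) w = ω₂ (ρ₂ g (ψ v)) (ψ w) := by
        rw [hAop, hψ]
      have hR : ω₁ (ρ₁ g (Aop v)) w = ω₂ (ρ₂ g (ψ v)) (ψ w) := by
        conv_lhs => rw [← hrho₁ g w]
        rw [hinv₁ g (Aop v) (ρ₁ g⁻¹ w), hAop, hψ g⁻¹, ← hinv₂ g (ψ v) (ρ₂ g⁻¹ (ψ w))]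
        congr 1
        have h : ρ₂ g * ρ₂ g⁻¹ = 1 := by rw [← map_mul, mul_inv_cancel, map_one]
        have := congrArg (fun F : Module.End ℂ V₂ => F (ψ w)) h
        simpa [Module.End.mul_apply] using this
      rw [map_sub, LinearMap.sub_apply, hL, hR, sub_self]
    exact sub_eq_zero.mp (hnd₁ _ hz)
  have hAcomm : ∀ g : G, Commute (ρ₁ g : Module.End ℂ V₁) Aop := by
    intro g
    ext v
    simp only [Module.End.mul_apply]
    exact (hAequiv g v).symm
  obtain ⟨p, hp2, hpbij⟩ := aux_sqrt Aop hAbij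
  set S : Module.End ℂ V₁ := aeval Aop p with hSdef
  have hScomm : ∀ g : G, Commute (ρ₁ g : Module.End ℂ V₁) S :=
    fun g => aux_commute Aop (ρ₁ g) (hAcomm g) p
  have hSsa : ∀ v w, ω₁ (S v) w = ω₁ v (S w) := aux_aeval_selfadj ω₁ Aop hAsa p
  let Se : V₁ ≃ₗ[ℂ] V₁ := LinearEquiv.ofBijective S hpbij
  have hSe : ∀ v, Se v = S v := fun v => rfl
  refine ⟨Se.symm.trans ψ, ?_, ?_⟩
  · intro g v
    have hcomm : Se.symm (ρ₁ g v) = ρ₁ g (Se.symm v) := by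
      rw [LinearEquiv.symm_apply_eq, hSe]
      have h := congrArg (fun F : Module.End ℂ V₁ => F (Se.symm v)) (hScomm g)
      simp only [Module.End.mul_apply] at h
      rw [← h]
      congr 1
      have : S (Se.symm v) = Se (Se.symm v) := rfl
      rw [this, Se.apply_symm_apply]
    simp only [LinearEquiv.trans_apply]
    rw [hcomm, hψ]
  · intro v w
    simp only [LinearEquiv.trans_apply]
    rw [← hAop (Se.symm v) (Se.symm w)]
    have hA2 : ∀ x, Aop x = S (S x) := by
      intro x
      rw [← hp2, pow_two]; rfl
    have hSsymm : ∀ x, S (Se.symm x) = x := fun x => Se.apply_symm_apply x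
    rw [hA2, hSsa (S (Se.symm v)) (Se.symm w), hSsymm, hSsymm]
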